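/- Let A be an affine Noetherian ℂ-algebra and e ∈ A an element such that ad(e) acts locally nilpotently on A, and let M be a finitely generated e-torsion-free A-module. Then the GK-dimension of the localization-type module M[e^{-1}] over A[e^{-1}] is at most GK_A(M). -/

import Mathlib

open Pointwise

/-- Gelfand–Kirillov dimension of a module `M` over a `ℂ`-algebra `A`:
the supremum over finite-dimensional subspaces `V ⊆ A`, `N ⊆ M` of
`limsup_n log dim((ℂ + V)ⁿ N) / log n`. -/
noncomputable def gkDimMod (A : Type*) [Ring A] [Algebra ℂ A]
    (M : Type*) [AddCommGroup M] [Module ℂ M] [Module A M] [IsScalarTower ℂ A M] : ENNReal :=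
  ⨆ (V : Submodule ℂ A) (_ : FiniteDimensional ℂ V)
    (N : Submodule ℂ M) (_ : FiniteDimensional ℂ N),
    Filter.limsup (fun n : ℕ =>
      ENNReal.ofReal (Real.log (Module.finrank ℂ
        (Submodule.span ℂ ((((1 ⊔ V) ^ n : Submodule ℂ A) : Set A) • (N : Set M)))) / Real.log n))
      Filter.atTop

/-- Gelfand–Kirillov dimension of a `ℂ`-algebra. -/
noncomputable def gkDim (A : Type*) [Ring A] [Algebra ℂ A] : ENNReal :=
  gkDimMod A A

section GKAux

open OreLocalization Finset

set_option linter.unusedSectionVars false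
set_option maxHeartbeats 1000000

variable {A : Type*} [Ring A] [Algebra ℂ A] (e : A)
  [OreLocalization.OreSet (Submonoid.powers e)]
variable {M : Type*} [AddCommGroup M] [Module ℂ M] [Module A M] [IsScalarTower ℂ A M]

/-- abbreviation for the Ore set of powers of `e` -/
abbrev GKSS (e : A) : Submonoid A := Submonoid.powers e

/-- the inner derivation `ad e` -/
noncomputable abbrev GKDD (e : A) : Module.End ℂ A :=
  LinearMap.mulLeft ℂ e - LinearMap.mulRight ℂ e

/-- the numerator map into the Ore localization, as a ℂ-linear map -/
noncomputable def gkNumL : M →ₗ[ℂ] OreLocalization (GKSS e) M where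
  toFun m := m /ₒ (1 : GKSS e)
  map_add' _ _ := add_oreDiv.symm
  map_smul' c m := (smul_oreDiv_one c m).symm

/-- multiplication by a fixed element of the localized ring, as a ℂ-linear map -/
noncomputable def gkSmulL (z : OreLocalization (GKSS e) A) :
    OreLocalization (GKSS e) M →ₗ[ℂ] OreLocalization (GKSS e) M where
  toFun x := z • x
  map_add' := smul_add z
  map_smul' c x := by simpa using (smul_comm c z x).symm

/-- the action of an algebra element on the module, as a ℂ-linear map -/
noncomputable def gkActL (a : A) : M →ₗ[ℂ] M where
  toFun m := a • m
  map_add' := smul_add a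
  map_smul' c m := by simpa using (smul_comm c a m).symm

lemma gk_clear_one (x : OreLocalization (GKSS e) M) :
    ∃ (k : ℕ) (m : M), ((e ^ k) /ₒ (1 : GKSS e)) • x = gkNumL e m := by
  induction x using OreLocalization.ind with
  | _ m s =>
    obtain ⟨k, hk⟩ := s.prop
    refine ⟨k, m, ?_⟩
    have h : (e ^ k : A) = (s : A) := hk
    show ((e ^ k) /ₒ (1 : GKSS e)) • (m /ₒ s) = m /ₒ (1 : GKSS e)
    rw [h, OreLocalization.smul_cancel]

lemma gk_einj (k : ℕ) :
    Function.Injective (fun x : OreLocalization (GKSS e) M => (e ^ k : A) • x) := by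
  intro x y h
  dsimp at h
  set u : (OreLocalization (GKSS e) A)ˣ := numeratorUnit (⟨e ^ k, ⟨k, rfl⟩⟩ : GKSS e) with hu
  have hx : ∀ z : OreLocalization (GKSS e) M, (e ^ k : A) • z = u • z := by
    intro z
    rw [Units.smul_def, hu]
    show _ = ((e ^ k : A) /ₒ (1 : GKSS e)) • z
    rw [oreDiv_one_smul]
  rw [hx, hx] at h
  simpa using congrArg (fun z => u⁻¹ • z) h

lemma gk_numL_inj (htf : ∀ (m : M) (n : ℕ), e ^ n • m = 0 → m = 0) :
    Function.Injective (gkNumL e (M := M)) := by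
  intro m m' h
  have h' : m /ₒ (1 : GKSS e) = m' /ₒ (1 : GKSS e) := h
  rw [oreDiv_eq_iff] at h'
  obtain ⟨u, v, h1, h2⟩ := h'
  have h2' : (u : A) = v := by simpa using h2
  have hsm : (u : A) • m' = (u : A) • m := by
    rw [← Submonoid.smul_def, h1, h2']
  obtain ⟨n, hn⟩ := u.prop
  have hn' : e ^ n = (u : A) := hn
  have h0 : e ^ n • (m' - m) = 0 := by
    rw [smul_sub, hn', hsm, sub_self]
  exact (sub_eq_zero.mp (htf _ _ h0)).symm

lemma gk_exists_W (hnil : ∀ a : A, ∃ k : ℕ, ((GKDD e) ^ k) a = 0) (t' : Finset A) :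
    ∃ (W : Submodule ℂ A) (p : ℕ), W.FG ∧ 0 < p ∧
      (∀ a ∈ t', a ∈ W) ∧ (∀ w ∈ W, ∀ j, ((GKDD e) ^ j) w ∈ W) ∧
      (∀ w ∈ W, ∀ j, p ≤ j → ((GKDD e) ^ j) w = 0) := by
  classical
  set p : ℕ := (t'.sup fun a => Classical.choose (hnil a)) + 1 with hp
  have hvan0 : ∀ a ∈ t', ∀ j, p ≤ j → ((GKDD e) ^ j) a = 0 := by
    intro a ha j hj
    have hpa : Classical.choose (hnil a) ≤ j := by
      have h1 : Classical.choose (hnil a) ≤ t'.sup fun a => Classical.choose (hnil a) := by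
        simpa using Finset.le_sup (f := fun a => Classical.choose (hnil a)) ha
      omega
    have h2 : ((GKDD e) ^ j) a = ((GKDD e) ^ (j - Classical.choose (hnil a)))
        (((GKDD e) ^ Classical.choose (hnil a)) a) := by
      rw [← Module.End.mul_apply, ← pow_add, Nat.sub_add_cancel hpa]
    rw [h2, Classical.choose_spec (hnil a), map_zero]
  set gens : Finset A := (t' ×ˢ Finset.range p).image (fun q => ((GKDD e) ^ q.2) q.1) with hg
  set W : Submodule ℂ A := Submodule.span ℂ (gens : Set A) with hW
  have hall : ∀ a ∈ t', ∀ i, ((GKDD e) ^ i) a ∈ W := by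
    intro a ha i
    by_cases hi : i < p
    · exact Submodule.subset_span (Finset.mem_coe.mpr
        (Finset.mem_image.mpr ⟨(a, i), Finset.mem_product.mpr ⟨ha, Finset.mem_range.mpr hi⟩, rfl⟩))
    · rw [hvan0 a ha i (le_of_not_gt hi)]; exact Submodule.zero_mem W
  refine ⟨W, p, ?_, Nat.succ_pos _, ?_, ?_, ?_⟩
  · exact Submodule.fg_span gens.finite_toSet
  · intro a ha
    simpa using hall a ha 0
  · intro w hw j
    have hle : W ≤ Submodule.comap ((GKDD e) ^ j) W := by
      rw [hW, Submodule.span_le]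
      intro x hx
      obtain ⟨⟨a, i⟩, hq, rfl⟩ := Finset.mem_image.mp (Finset.mem_coe.mp hx)
      obtain ⟨ha, -⟩ := Finset.mem_product.mp hq
      simp only [SetLike.mem_coe, Submodule.mem_comap, ← Module.End.mul_apply, ← pow_add]
      exact hall a ha (j + i)
    exact hle hw
  · intro w hw j hj
    have hle : W ≤ LinearMap.ker ((GKDD e) ^ j) := by
      rw [hW, Submodule.span_le]
      intro x hx
      obtain ⟨⟨a, i⟩, hq, rfl⟩ := Finset.mem_image.mp (Finset.mem_coe.mp hx)
      obtain ⟨ha, -⟩ := Finset.mem_product.mp hq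
      simp only [SetLike.mem_coe, LinearMap.mem_ker, ← Module.End.mul_apply, ← pow_add]
      exact hvan0 a ha (j + i) (le_trans hj (Nat.le_add_right _ _))
    exact hle hw

lemma gk_clear_findim (N' : Submodule ℂ (OreLocalization (GKSS e) M))
    (hfd : FiniteDimensional ℂ N') :
    ∃ (k : ℕ) (t : Finset M),
      Submodule.map (gkSmulL e ((e ^ k) /ₒ (1 : GKSS e))) N'
        ≤ Submodule.map (gkNumL e) (Submodule.span ℂ (t : Set M)) := by
  classical
  obtain ⟨s, hs⟩ := Module.Finite.iff_fg.mp hfd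
  choose kf mf hclear using fun x : OreLocalization (GKSS e) M => gk_clear_one e x
  set k := s.sup kf with hk
  refine ⟨k, s.image (fun x => e ^ (k - kf x) • mf x), ?_⟩
  rw [← hs, Submodule.map_span, Submodule.span_le]
  rintro _ ⟨x, hx, rfl⟩
  have hkx : kf x ≤ k := Finset.le_sup hx
  have hval : gkSmulL e ((e ^ k) /ₒ (1 : GKSS e)) x = gkNumL e (e ^ (k - kf x) • mf x) := by
    show ((e ^ k) /ₒ (1 : GKSS e)) • x = _
    have h1 : ((e ^ k) /ₒ (1 : GKSS e)) = ((e ^ (k - kf x)) /ₒ (1 : GKSS e)) *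
        ((e ^ (kf x)) /ₒ (1 : GKSS e)) := by
      rw [mul_div_one, ← pow_add, Nat.sub_add_cancel hkx]
    rw [h1, mul_smul, hclear x]
    show _ = (e ^ (k - kf x) • mf x) /ₒ (1 : GKSS e)
    rw [show gkNumL e (mf x) = (mf x) /ₒ (1 : GKSS e) from rfl, smul_div_one]
  rw [hval]
  exact Submodule.mem_map_of_mem (Submodule.subset_span
    (by exact Finset.mem_coe.mpr (Finset.mem_image.mpr ⟨x, hx, rfl⟩)))

lemma gk_one_le_pow {P : Submodule ℂ A} (h1 : 1 ≤ P) (n : ℕ) : 1 ≤ P ^ n := by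
  induction n with
  | zero => rw [pow_zero]
  | succ n ih =>
    calc (1 : Submodule ℂ A) = 1 * 1 := (one_mul 1).symm
    _ ≤ P ^ n * P := mul_le_mul' ih h1
    _ = P ^ (n + 1) := (pow_succ P n).symm

lemma gk_pow_mono_exp {P : Submodule ℂ A} (h1 : 1 ≤ P) {c c' : ℕ} (h : c ≤ c') :
    P ^ c ≤ P ^ c' := by
  calc P ^ c = P ^ c * 1 := (mul_one _).symm
  _ ≤ P ^ c * P ^ (c' - c) := mul_le_mul' le_rfl (gk_one_le_pow h1 _)
  _ = P ^ c' := by rw [← pow_add, Nat.add_sub_cancel' h]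

lemma gk_spgen_mono {P P' : Submodule ℂ A} {N N' : Submodule ℂ M} (hP : P ≤ P') (hN : N ≤ N') :
    Submodule.span ℂ ((P : Set A) • (N : Set M))
      ≤ Submodule.span ℂ ((P' : Set A) • (N' : Set M)) :=
  Submodule.span_mono (Set.smul_subset_smul hP hN)

lemma gk_spgen_mem {P : Submodule ℂ A} {N : Submodule ℂ M} {a : A} {m : M}
    (ha : a ∈ P) (hm : m ∈ N) : a • m ∈ Submodule.span ℂ ((P : Set A) • (N : Set M)) :=
  Submodule.subset_span (Set.smul_mem_smul ha hm)

lemma gk_spgen_smul {P Q : Submodule ℂ A} {N : Submodule ℂ M} {a : A} (ha : a ∈ P) {x : M}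
    (hx : x ∈ Submodule.span ℂ ((Q : Set A) • (N : Set M))) :
    a • x ∈ Submodule.span ℂ (((P * Q : Submodule ℂ A) : Set A) • (N : Set M)) := by
  have h0 : a • x = gkActL a x := rfl
  rw [h0]
  have hmap : Submodule.map (gkActL a) (Submodule.span ℂ ((Q : Set A) • (N : Set M)))
      ≤ Submodule.span ℂ (((P * Q : Submodule ℂ A) : Set A) • (N : Set M)) := by
    rw [Submodule.map_span, Submodule.span_le]
    rintro _ ⟨_, ⟨q, hq, m, hm, rfl⟩, rfl⟩
    have h1 : gkActL a (q • m) = (a * q) • m := by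
      show a • q • m = (a * q) • m
      rw [mul_smul]
    rw [h1]
    exact Submodule.subset_span
      (Set.smul_mem_smul (Submodule.mul_mem_mul ha hq) hm)
  exact hmap (Submodule.mem_map_of_mem hx)

lemma gk_spgen_findim {P : Submodule ℂ A} {N : Submodule ℂ M} (hP : P.FG) (hN : N.FG) :
    FiniteDimensional ℂ (Submodule.span ℂ ((P : Set A) • (N : Set M))) := by
  obtain ⟨s, hs⟩ := hP
  obtain ⟨t, ht⟩ := hN
  have hle : Submodule.span ℂ ((P : Set A) • (N : Set M))
      ≤ Submodule.span ℂ (Set.image2 (· • ·) (s : Set A) (t : Set M)) := by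
    rw [Submodule.span_le]
    rintro _ ⟨a, ha, m, hm, rfl⟩
    have ha' : a ∈ Submodule.span ℂ (s : Set A) := by rw [hs]; exact ha
    have hm' : m ∈ Submodule.span ℂ (t : Set M) := by rw [ht]; exact hm
    have step1 : a • m ∈ Submodule.span ℂ ((· • m) '' (s : Set A)) := by
      have hmap : Submodule.map
          ({ toFun := fun b : A => b • m,
             map_add' := fun b b' => add_smul b b' m,
             map_smul' := fun c b => by simpa using smul_assoc c b m } : A →ₗ[ℂ] M)
          (Submodule.span ℂ (s : Set A)) = Submodule.span ℂ ((· • m) '' (s : Set A)) := by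
        rw [Submodule.map_span]; rfl
      rw [← hmap]
      exact Submodule.mem_map_of_mem ha'
    refine Submodule.span_le.mpr ?_ step1
    rintro _ ⟨b, hb, rfl⟩
    have step2 : b • m ∈ Submodule.span ℂ ((b • ·) '' (t : Set M)) := by
      have hmap : Submodule.map (gkActL (M := M) b) (Submodule.span ℂ (t : Set M))
          = Submodule.span ℂ ((b • ·) '' (t : Set M)) := by rw [Submodule.map_span]; rfl
      rw [← hmap]
      exact Submodule.mem_map_of_mem hm'
    refine Submodule.span_le.mpr ?_ step2
    rintro _ ⟨x, hx, rfl⟩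
    exact Submodule.subset_span (Set.mem_image2_of_mem hb hx)
  have hfin : FiniteDimensional ℂ
      (Submodule.span ℂ (Set.image2 (· • ·) (s : Set A) (t : Set M))) :=
    FiniteDimensional.span_of_finite ℂ (Set.Finite.image2 _ s.finite_toSet t.finite_toSet)
  exact Submodule.finiteDimensional_of_le hle

lemma gk_binomA (r : ℕ) (a : A) :
    e ^ r * a = ∑ m ∈ range (r + 1), r.choose m • (((GKDD e) ^ (r - m)) a * e ^ m) := by
  have hsplit : LinearMap.mulLeft ℂ e = LinearMap.mulRight ℂ e + GKDD e := by
    ext b; simp [GKDD]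
  have hcomm : Commute (LinearMap.mulRight ℂ e) (GKDD e) := by
    ext b
    simp only [GKDD, LinearMap.mulRight_apply, LinearMap.sub_apply,
      LinearMap.mulLeft_apply, Module.End.mul_apply, sub_mul, mul_sub, mul_assoc]
  have h1 : e ^ r * a = ((LinearMap.mulLeft ℂ e) ^ r) a := by
    rw [LinearMap.pow_mulLeft, LinearMap.mulLeft_apply]
  rw [h1, hsplit, hcomm.add_pow]
  rw [LinearMap.sum_apply]
  refine Finset.sum_congr rfl fun m hm => ?_
  rw [Module.End.mul_apply, Module.End.mul_apply]
  have hc : ((r.choose m : Module.End ℂ A)) a = r.choose m • a := by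
    simp [Module.End.natCast_apply]
  rw [hc, map_nsmul, map_nsmul, LinearMap.pow_mulRight, LinearMap.mulRight_apply]

lemma gk_master
    (V' : Submodule ℂ (OreLocalization (GKSS e) A))
    (N' : Submodule ℂ (OreLocalization (GKSS e) M))
    (W : Submodule ℂ A) (N : Submodule ℂ M) (l k p : ℕ)
    (hstab : ∀ w ∈ W, ∀ j, ((GKDD e) ^ j) w ∈ W)
    (hvan : ∀ w ∈ W, ∀ j, p ≤ j → ((GKDD e) ^ j) w = 0)
    (he : e ∈ W)
    (hu : ∀ u ∈ (1 ⊔ V' : Submodule ℂ (OreLocalization (GKSS e) A)),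
      ((e ^ l) /ₒ (1 : GKSS e)) * u ∈ Submodule.map (gkNumL e (M := A)) W)
    (hy : ∀ y ∈ N', ((e ^ k) /ₒ (1 : GKSS e)) • y ∈ Submodule.map (gkNumL e (M := M)) N) :
    ∀ (n R : ℕ), n * (l + p) + k ≤ R →
      ∀ z ∈ ((1 ⊔ V') ^ n : Submodule ℂ (OreLocalization (GKSS e) A)), ∀ y ∈ N',
      ((e ^ R) /ₒ (1 : GKSS e)) • (z • y) ∈ Submodule.map (gkNumL e (M := M))
        (Submodule.span ℂ ((((1 ⊔ W) ^ (R + n) : Submodule ℂ A) : Set A) • (N : Set M))) := by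
  intro n
  induction n with
  | zero =>
    intro R hR z hz y hyN'
    rw [pow_zero] at hz
    rw [Submodule.one_eq_span] at hz
    obtain ⟨c, hc⟩ := Submodule.mem_span_singleton.mp hz
    have hzy : z • y = c • y := by rw [← hc, smul_assoc, one_smul]
    rw [hzy, smul_comm]
    have hk : k ≤ R := by omega
    refine Submodule.smul_mem _ c ?_
    have hsplit : ((e ^ R) /ₒ (1 : GKSS e)) =
        ((e ^ (R - k)) /ₒ (1 : GKSS e)) * ((e ^ k) /ₒ (1 : GKSS e)) := by
      rw [mul_div_one, ← pow_add, Nat.sub_add_cancel hk]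
    rw [hsplit, mul_smul]
    obtain ⟨m0, hm0, hm0e⟩ := hy y hyN'
    rw [← hm0e]
    have h2 : ((e ^ (R - k)) /ₒ (1 : GKSS e)) • (gkNumL e m0) = gkNumL e (e ^ (R - k) • m0) := by
      show ((e ^ (R - k)) /ₒ (1 : GKSS e)) • (m0 /ₒ (1 : GKSS e))
        = (e ^ (R - k) • m0) /ₒ (1 : GKSS e)
      exact smul_div_one
    rw [h2]
    refine Submodule.mem_map_of_mem ?_
    have hmem : e ^ (R - k) ∈ ((1 ⊔ W : Submodule ℂ A) ^ (R + 0)) :=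
      gk_pow_mono_exp le_sup_left (by omega)
        (Submodule.pow_mem_pow _ (Submodule.mem_sup_right he) _)
    exact gk_spgen_mem hmem hm0
  | succ n ih =>
    intro R hR z hz y hyN'
    rw [pow_succ'] at hz
    refine Submodule.mul_induction_on hz (fun u hu' z' hz' => ?_)
      (fun x₁ x₂ h₁ h₂ => ?_)
    swap
    · rw [add_smul, smul_add]
      exact Submodule.add_mem _ h₁ h₂
    have hR' : n * (l + p) + (l + p) + k ≤ R := by
      rw [Nat.succ_mul] at hR; omega
    have hlR : l ≤ R := by omega
    obtain ⟨w, hwW, hw⟩ := hu u hu'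
    set Ψ : OreLocalization (GKSS e) A →ₗ[ℂ] OreLocalization (GKSS e) M :=
      { toFun := fun ζ => (ζ * z') • y
        map_add' := fun ζ₁ ζ₂ => by rw [add_mul, add_smul]
        map_smul' := fun c ζ => by
          dsimp only [RingHom.id_apply]
          rw [smul_mul_assoc, smul_assoc] } with hΨ
    have hchain : Ψ (gkNumL e (M := A) (e ^ (R - l) * w)) =
        ((e ^ R) /ₒ (1 : GKSS e)) • ((u * z') • y) := by
      show (((e ^ (R - l) * w) /ₒ (1 : GKSS e)) * z') • y = _
      have h1 : ((e ^ (R - l) * w) /ₒ (1 : GKSS e)) =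
          ((e ^ (R - l)) /ₒ (1 : GKSS e)) * (w /ₒ (1 : GKSS e)) := mul_div_one.symm
      have h2 : (w /ₒ (1 : GKSS e)) = ((e ^ l) /ₒ (1 : GKSS e)) * u := hw
      have h3 : ((e ^ (R - l)) /ₒ (1 : GKSS e)) * (((e ^ l) /ₒ (1 : GKSS e)) * u) =
          ((e ^ R) /ₒ (1 : GKSS e)) * u := by
        rw [← mul_assoc, mul_div_one, ← pow_add, Nat.sub_add_cancel hlR]
      rw [h1, h2, h3, mul_assoc, mul_smul]
    rw [← hchain, gk_binomA e (R - l) w, map_sum, map_sum]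
    refine Submodule.sum_mem _ fun m hm => ?_
    rw [map_nsmul, map_nsmul]
    refine nsmul_mem ?_ _
    by_cases hj : p ≤ R - l - m
    · rw [hvan w hwW _ hj, zero_mul, map_zero, map_zero]
      exact Submodule.zero_mem _
    · have hmR : m ≤ R - l := by
        have := Finset.mem_range.mp hm; omega
      have hm' : n * (l + p) + k ≤ m := by omega
      have hterm : Ψ (gkNumL e (M := A) (((GKDD e) ^ (R - l - m)) w * e ^ m)) =
          (gkNumL e (M := A) (((GKDD e) ^ (R - l - m)) w)) •
            (((e ^ m) /ₒ (1 : GKSS e)) • (z' • y)) := by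
        show (((((GKDD e) ^ (R - l - m)) w * e ^ m) /ₒ (1 : GKSS e)) * z') • y = _
        have h1 : ((((GKDD e) ^ (R - l - m)) w * e ^ m) /ₒ (1 : GKSS e)) =
            ((((GKDD e) ^ (R - l - m)) w) /ₒ (1 : GKSS e)) * ((e ^ m) /ₒ (1 : GKSS e)) :=
          mul_div_one.symm
        rw [h1, mul_assoc, mul_smul, mul_smul]
        rfl
      rw [hterm]
      obtain ⟨ζ, hζ, hζe⟩ := ih m hm' z' hz' y hyN'
      rw [← hζe]
      have h4 : gkNumL e (M := A) (((GKDD e) ^ (R - l - m)) w) • gkNumL e (M := M) ζ =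
          gkNumL e (M := M) (((GKDD e) ^ (R - l - m)) w • ζ) := smul_div_one
      rw [h4]
      refine Submodule.mem_map_of_mem ?_
      have h5 : ((GKDD e) ^ (R - l - m)) w • ζ ∈ Submodule.span ℂ
          ((((1 ⊔ W) * (1 ⊔ W) ^ (m + n) : Submodule ℂ A) : Set A) • (N : Set M)) :=
        gk_spgen_smul (Submodule.mem_sup_right (hstab w hwW _)) hζ
      rw [← pow_succ'] at h5
      exact gk_spgen_mono (gk_pow_mono_exp le_sup_left (by omega)) le_rfl h5

lemma gk_log_nat_mono {a b : ℕ} (h : a ≤ b) : Real.log a ≤ Real.log b := by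
  rcases Nat.eq_zero_or_pos a with ha | ha
  · subst ha
    simp only [Nat.cast_zero, Real.log_zero]
    rcases Nat.eq_zero_or_pos b with hb | hb
    · subst hb; simp
    · exact Real.log_nonneg (by exact_mod_cast hb)
  · exact Real.log_le_log (by exact_mod_cast ha) (by exact_mod_cast h)

end GKAux

open OreLocalization in
/-- **Lemma 7 (variant).** Let `A` be an affine Noetherian `ℂ`-algebra and `e ∈ A` an
element such that `ad(e)` acts locally nilpotently on `A` (so that the powers of `e` form
an Ore set), and let `M` be a finitely generated `e`-torsion-free `A`-module.  Then the
GK-dimension of the Ore localization `M[e⁻¹]` over `A[e⁻¹]` is at most `GK_A(M)`. -/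
theorem gk_oreLocalization_le (A : Type*) [Ring A] [Algebra ℂ A] [IsNoetherianRing A]
    (haff : Algebra.FiniteType ℂ A) (e : A)
    (hnil : ∀ a : A, ∃ k : ℕ,
      ((LinearMap.mulLeft ℂ e - LinearMap.mulRight ℂ e) ^ k) a = 0)
    [OreLocalization.OreSet (Submonoid.powers e)]
    (M : Type*) [AddCommGroup M] [Module ℂ M] [Module A M] [IsScalarTower ℂ A M]
    [Module.Finite A M]
    (htf : ∀ (m : M) (n : ℕ), e ^ n • m = 0 → m = 0) :
    gkDimMod (OreLocalization (Submonoid.powers e) A)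
        (OreLocalization (Submonoid.powers e) M)
      ≤ gkDimMod A M := by
  classical
  unfold gkDimMod
  refine iSup_le fun V' => iSup_le fun hfdV' => iSup_le fun N' => iSup_le fun hfdN' => ?_
  -- clear denominators of V' and N'
  obtain ⟨l, tU, hUle⟩ := gk_clear_findim e (M := A) V' hfdV'
  obtain ⟨k, tN, hNle⟩ := gk_clear_findim e (M := M) N' hfdN'
  -- build the finite-dimensional D-stable subspace W
  obtain ⟨W, p, hWfg, hp, hmem, hstab, hvan⟩ :=
    gk_exists_W e hnil (insert e (insert (e ^ l) tU))
  have he : e ∈ W := hmem _ (Finset.mem_insert_self _ _)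
  have hel : e ^ l ∈ W := hmem _ (Finset.mem_insert_of_mem (Finset.mem_insert_self _ _))
  have htUW : Submodule.span ℂ (tU : Set A) ≤ W := by
    rw [Submodule.span_le]
    intro a ha
    exact hmem _ (Finset.mem_insert_of_mem (Finset.mem_insert_of_mem (Finset.mem_coe.mp ha)))
  set N : Submodule ℂ M := Submodule.span ℂ (tN : Set M) with hN
  have hNfd : FiniteDimensional ℂ N := FiniteDimensional.span_of_finite ℂ tN.finite_toSet
  -- the hypotheses of the master lemma
  have hu : ∀ u ∈ (1 ⊔ V' : Submodule ℂ (OreLocalization (GKSS e) A)),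
      ((e ^ l) /ₒ (1 : GKSS e)) * u ∈ Submodule.map (gkNumL e (M := A)) W := by
    intro u hu'
    rw [Submodule.mem_sup] at hu'
    obtain ⟨z1, hz1, v, hv, rfl⟩ := hu'
    rw [mul_add]
    refine Submodule.add_mem _ ?_ ?_
    · rw [Submodule.one_eq_span] at hz1
      obtain ⟨c, hc⟩ := Submodule.mem_span_singleton.mp hz1
      have hcv : ((e ^ l) /ₒ (1 : GKSS e)) * z1 = gkNumL e (M := A) (c • e ^ l) := by
        rw [← hc, mul_smul_comm, mul_one, map_smul]
        rfl
      rw [hcv]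
      exact Submodule.mem_map_of_mem (Submodule.smul_mem _ _ hel)
    · have hv' : ((e ^ l) /ₒ (1 : GKSS e)) * v
          = gkSmulL e (M := A) ((e ^ l) /ₒ (1 : GKSS e)) v := rfl
      rw [hv']
      exact Submodule.map_mono htUW (hUle (Submodule.mem_map_of_mem hv))
  have hy : ∀ y ∈ N', ((e ^ k) /ₒ (1 : GKSS e)) • y ∈ Submodule.map (gkNumL e (M := M)) N := by
    intro y hy'
    exact hNle (Submodule.mem_map_of_mem hy')
  -- target data on the A-side
  set c0 : ℕ := l + p + k + 1 with hc0
  set V'' : Submodule ℂ A := (1 ⊔ W) ^ c0 with hV''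
  have hWsupfg : (1 ⊔ W : Submodule ℂ A).FG := by
    refine Submodule.FG.sup ?_ hWfg
    rw [Submodule.one_eq_span]
    exact Submodule.fg_span_singleton _
  have hV''fd : FiniteDimensional ℂ V'' := by
    rw [hV'']
    exact Module.Finite.iff_fg.mpr (Submodule.FG.pow hWsupfg c0)
  have hone_le : (1 : Submodule ℂ A) ≤ V'' := gk_one_le_pow le_sup_left c0
  have hsup_eq : (1 : Submodule ℂ A) ⊔ V'' = V'' := sup_eq_right.mpr hone_le
  -- dimension comparison
  have hdim : ∀ n : ℕ, 1 ≤ n →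
      (Module.finrank ℂ (Submodule.span ℂ
        ((((1 ⊔ V') ^ n : Submodule ℂ (OreLocalization (GKSS e) A)) :
            Set (OreLocalization (GKSS e) A)) • (N' : Set (OreLocalization (GKSS e) M)))))
      ≤ Module.finrank ℂ (Submodule.span ℂ
        ((((1 ⊔ V'') ^ n : Submodule ℂ A) : Set A) • (N : Set M))) := by
    intro n hn
    set R : ℕ := n * (l + p) + k with hR
    set g := gkSmulL e (M := M) ((e ^ R) /ₒ (1 : GKSS e)) with hg
    have hginj : Function.Injective g := by
      intro x y h
      apply gk_einj e R
      have hgx : ∀ z, g z = (e ^ R : A) • z := by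
        intro z
        show ((e ^ R) /ₒ (1 : GKSS e)) • z = _
        rw [oreDiv_one_smul]
      rw [hgx, hgx] at h
      exact h
    set SP : ℕ → Submodule ℂ M := fun c =>
      Submodule.span ℂ ((((1 ⊔ W) ^ c : Submodule ℂ A) : Set A) • (N : Set M)) with hSP
    set FV : Submodule ℂ (OreLocalization (GKSS e) M) := Submodule.span ℂ
        ((((1 ⊔ V') ^ n : Submodule ℂ (OreLocalization (GKSS e) A)) :
            Set (OreLocalization (GKSS e) A)) • (N' : Set (OreLocalization (GKSS e) M)))
      with hFV
    have h1 : Submodule.map g FV ≤ Submodule.map (gkNumL e (M := M)) (SP (R + n)) := by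
      rw [hFV, Submodule.map_span, Submodule.span_le]
      rintro _ ⟨_, ⟨z, hz, y, hy', rfl⟩, rfl⟩
      exact gk_master e V' N' W N l k p hstab hvan he hu hy n R le_rfl z hz y hy'
    have hcn : R + n ≤ c0 * n := by
      have h2 : c0 * n = n * (l + p) + (k * n + n) := by rw [hc0]; ring
      have h3 : k * 1 ≤ k * n := Nat.mul_le_mul_left k hn
      omega
    have h2 : SP (R + n) ≤ SP (c0 * n) :=
      gk_spgen_mono (gk_pow_mono_exp le_sup_left hcn) le_rfl
    have hSPfd : FiniteDimensional ℂ (SP (c0 * n)) :=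
      gk_spgen_findim (Submodule.FG.pow hWsupfg _) (Submodule.fg_span tN.finite_toSet)
    have hZfd : FiniteDimensional ℂ (Submodule.map (gkNumL e (M := M)) (SP (c0 * n))) :=
      Module.Finite.map _ _
    have e1 : Module.finrank ℂ FV = Module.finrank ℂ (Submodule.map g FV) :=
      (Submodule.equivMapOfInjective g hginj FV).finrank_eq
    have e2 : Module.finrank ℂ (Submodule.map g FV)
        ≤ Module.finrank ℂ (Submodule.map (gkNumL e (M := M)) (SP (c0 * n))) :=
      Submodule.finrank_mono (le_trans h1 (Submodule.map_mono h2))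
    have e3 : Module.finrank ℂ (Submodule.map (gkNumL e (M := M)) (SP (c0 * n)))
        = Module.finrank ℂ (SP (c0 * n)) :=
      ((Submodule.equivMapOfInjective _ (gk_numL_inj e htf) (SP (c0 * n))).finrank_eq).symm
    have e4 : Submodule.span ℂ ((((1 ⊔ V'') ^ n : Submodule ℂ A) : Set A) • (N : Set M))
        = SP (c0 * n) := by
      rw [hSP, hsup_eq, hV'', ← pow_mul]
    rw [e4]
    calc Module.finrank ℂ FV = _ := e1
      _ ≤ _ := e2
      _ = _ := e3
  -- compare the limsups
  have hls : Filter.limsup (fun n : ℕ =>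
      ENNReal.ofReal (Real.log (Module.finrank ℂ
        (Submodule.span ℂ ((((1 ⊔ V') ^ n : Submodule ℂ (OreLocalization (GKSS e) A)) :
            Set (OreLocalization (GKSS e) A)) •
          (N' : Set (OreLocalization (GKSS e) M))))) / Real.log n)) Filter.atTop
      ≤ Filter.limsup (fun n : ℕ =>
      ENNReal.ofReal (Real.log (Module.finrank ℂ
        (Submodule.span ℂ ((((1 ⊔ V'') ^ n : Submodule ℂ A) : Set A) • (N : Set M))))
          / Real.log n)) Filter.atTop := by
    refine Filter.limsup_le_limsup ?_
    refine Filter.eventually_atTop.mpr ⟨2, fun n hn => ?_⟩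
    have hlogn : (0 : ℝ) < Real.log n :=
      Real.log_pos (by exact_mod_cast hn)
    refine ENNReal.ofReal_le_ofReal ?_
    have hdd := hdim n (by omega)
    have hlog := gk_log_nat_mono hdd
    exact div_le_div_of_nonneg_right hlog hlogn.le
  refine le_trans hls ?_
  exact le_iSup_of_le V'' (le_iSup_of_le hV''fd (le_iSup_of_le N (le_iSup_of_le hNfd le_rfl)))
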